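/- Let 3/2 < β ≤ 2. Then there exists a constant C > 0 such that for every real Λ ≥ 2, ∑_{k ∈ ℤ², k ≠ 0} (1+|k|²)^{−β/2} · ( ∑_{p ∈ ℤ², 1+|p|² > Λ² and 1+|p+k|² > Λ²} 1/((1+|p|²)(1+|p+k|²)) ) ≤ C · (1+log Λ) · Λ^{−β}. -/

import Mathlib

open scoped ENNReal

/-- Squared Euclidean norm on `ℤ²`. -/
noncomputable def nsq (p : ℤ × ℤ) : ℝ := (p.1 : ℝ) ^ 2 + (p.2 : ℝ) ^ 2

lemma nsq_nonneg (p : ℤ × ℤ) : 0 ≤ nsq p := by unfold nsq; positivity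

lemma one_le_h (p : ℤ × ℤ) : 1 ≤ 1 + nsq p := by have := nsq_nonneg p; linarith

lemma h_pos (p : ℤ × ℤ) : 0 < 1 + nsq p := lt_of_lt_of_le one_pos (one_le_h p)

lemma h_quad (p k : ℤ × ℤ) : 1 + nsq k ≤ 2 * (1 + nsq p) + 2 * (1 + nsq (p + k)) := by
  unfold nsq
  simp only [Prod.fst_add, Prod.snd_add, Int.cast_add]
  nlinarith [sq_nonneg ((2:ℝ) * p.1 + k.1), sq_nonneg ((2:ℝ) * p.2 + k.2)]

lemma one_lt_h (k : ℤ × ℤ) (hk : k ≠ 0) : 1 < 1 + nsq k := by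
  have h1 : k.1 ≠ 0 ∨ k.2 ≠ 0 := by
    by_contra h
    push_neg at h
    exact hk (Prod.ext h.1 h.2)
  have : (1:ℝ) ≤ nsq k := by
    unfold nsq
    rcases h1 with h | h
    · have : (1:ℤ) ≤ |k.1| := Int.one_le_abs h
      have h2 : (1:ℝ) ≤ |(k.1:ℝ)| := by exact_mod_cast (by push_cast [← Int.cast_abs]; exact_mod_cast this : (1:ℝ) ≤ ((|k.1| : ℤ) : ℝ))
      nlinarith [sq_nonneg ((k.2:ℝ)), sq_abs ((k.1:ℝ))]
    · have : (1:ℤ) ≤ |k.2| := Int.one_le_abs h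
      have h2 : (1:ℝ) ≤ |(k.2:ℝ)| := by exact_mod_cast (by push_cast [← Int.cast_abs]; exact_mod_cast this : (1:ℝ) ≤ ((|k.2| : ℤ) : ℝ))
      nlinarith [sq_nonneg ((k.1:ℝ)), sq_abs ((k.2:ℝ))]
  linarith

lemma exists_dyadic (x : ℝ) (hx : 1 ≤ x) : ∃ j : ℕ, (2:ℝ) ^ j ≤ x ∧ x < 2 ^ (j + 1) := by
  have h1 : 1 ≤ ⌊x⌋₊ := Nat.one_le_floor_iff x |>.mpr hx
  refine ⟨Nat.log 2 ⌊x⌋₊, ?_, ?_⟩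
  · have h2 := Nat.pow_log_le_self 2 (by omega : ⌊x⌋₊ ≠ 0)
    calc (2:ℝ) ^ Nat.log 2 ⌊x⌋₊ = ((2 ^ Nat.log 2 ⌊x⌋₊ : ℕ) : ℝ) := by push_cast; ring
      _ ≤ (⌊x⌋₊ : ℝ) := by exact_mod_cast h2
      _ ≤ x := Nat.floor_le (by linarith)
  · have h3 : ⌊x⌋₊ + 1 ≤ 2 ^ (Nat.log 2 ⌊x⌋₊ + 1) :=
      Nat.lt_pow_succ_log_self (by norm_num) ⌊x⌋₊
    calc x < (⌊x⌋₊ : ℝ) + 1 := Nat.lt_floor_add_one x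
      _ ≤ ((2 ^ (Nat.log 2 ⌊x⌋₊ + 1) : ℕ) : ℝ) := by exact_mod_cast h3
      _ = _ := by push_cast; ring

lemma one_add_log_le (x : ℝ) (hx : 1 ≤ x) : 1 + Real.log x ≤ 9 * x ^ ((1:ℝ)/8) := by
  have hx0 : 0 < x := by linarith
  have h1 : (1:ℝ) ≤ x ^ ((1:ℝ)/8) := by
    calc (1:ℝ) = 1 ^ ((1:ℝ)/8) := (Real.one_rpow _).symm
      _ ≤ x ^ ((1:ℝ)/8) := Real.rpow_le_rpow zero_le_one hx (by norm_num)
  have h2 : Real.log (x ^ ((1:ℝ)/8)) = (1/8) * Real.log x := Real.log_rpow hx0 _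
  have h3 : Real.log (x ^ ((1:ℝ)/8)) ≤ x ^ ((1:ℝ)/8) - 1 :=
    Real.log_le_sub_one_of_pos (by positivity)
  nlinarith

lemma count_le (t : ℝ) (ht : 1 ≤ t) (c : ℝ≥0∞) (f : ℤ × ℤ → ℝ≥0∞)
    (hf : ∀ p, f p ≤ if 1 + nsq p ≤ t then c else 0) :
    ∑' p : ℤ × ℤ, f p ≤ ENNReal.ofReal (9 * t) * c := by
  classical
  have h0t : (0:ℝ) ≤ t := le_trans zero_le_one ht
  set n : ℕ := ⌊Real.sqrt t⌋₊ with hn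
  set box : Finset (ℤ × ℤ) := Finset.Icc (-(n:ℤ)) n ×ˢ Finset.Icc (-(n:ℤ)) n with hbox
  have hmem : ∀ x : ℤ, ((x:ℝ))^2 ≤ t → x ∈ Finset.Icc (-(n:ℤ)) n := by
    intro x hx
    have habs : |(x:ℝ)| ≤ Real.sqrt t := by
      rw [← Real.sqrt_sq_eq_abs]; exact Real.sqrt_le_sqrt hx
    have hna : (x.natAbs : ℝ) ≤ Real.sqrt t := by
      rw [Nat.cast_natAbs, Int.cast_abs]; exact habs
    have h2 : x.natAbs ≤ n := Nat.le_floor hna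
    rw [Finset.mem_Icc]
    omega
  have key : ∀ p : ℤ × ℤ, p ∉ box → (if 1 + nsq p ≤ t then c else 0) = 0 := by
    intro p hp
    rw [if_neg]
    intro hle
    apply hp
    have h1 : ((p.1:ℝ))^2 ≤ t := by unfold nsq at hle; nlinarith [sq_nonneg ((p.2:ℝ))]
    have h2 : ((p.2:ℝ))^2 ≤ t := by unfold nsq at hle; nlinarith [sq_nonneg ((p.1:ℝ))]
    rw [hbox, Finset.mem_product]
    exact ⟨hmem _ h1, hmem _ h2⟩
  have hcard : box.card = (2*n+1)^2 := by
    rw [hbox, Finset.card_product, Int.card_Icc]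
    have : ((n:ℤ) + 1 - -(n:ℤ)).toNat = 2*n+1 := by omega
    rw [this]; ring
  have hsqrt1 : (1:ℝ) ≤ Real.sqrt t := by
    rw [show (1:ℝ) = Real.sqrt 1 by simp]
    exact Real.sqrt_le_sqrt ht
  have hnle : (n:ℝ) ≤ Real.sqrt t := Nat.floor_le (by linarith)
  have hcardR : (((2*n+1)^2 : ℕ) : ℝ) ≤ 9 * t := by
    push_cast
    have hs := Real.sq_sqrt h0t
    nlinarith [hnle, hsqrt1]
  calc ∑' p, f p ≤ ∑' p : ℤ × ℤ, (if 1 + nsq p ≤ t then c else 0) := ENNReal.tsum_le_tsum hf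
    _ = ∑ p ∈ box, (if 1 + nsq p ≤ t then c else 0) := tsum_eq_sum key
    _ ≤ ∑ _p ∈ box, c := Finset.sum_le_sum (fun p _ => by split <;> simp)
    _ = box.card • c := Finset.sum_const c
    _ = ((box.card : ℕ) : ℝ≥0∞) * c := by rw [nsmul_eq_mul]
    _ ≤ ENNReal.ofReal (9 * t) * c := by
        apply mul_le_mul_left
        rw [hcard, ← ENNReal.ofReal_natCast]
        exact ENNReal.ofReal_le_ofReal hcardR

lemma shell_tail (α : ℝ) (hα : 1 < α) : ∃ C : ℝ, 0 < C ∧ ∀ M : ℝ, 1 ≤ M →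
    ∑' p : ℤ × ℤ, (if M < 1 + nsq p then ENNReal.ofReal ((1 + nsq p) ^ (-α)) else 0)
      ≤ ENNReal.ofReal (C * M ^ (1 - α)) := by
  classical
  have hr0 : (0:ℝ) < 2 ^ (1 - α) := Real.rpow_pos_of_pos two_pos _
  have hr1 : (2:ℝ) ^ (1 - α) < 1 := Real.rpow_lt_one_of_one_lt_of_neg one_lt_two (by linarith)
  refine ⟨18 * (1 - 2 ^ (1 - α))⁻¹, mul_pos (by norm_num) (inv_pos.mpr (by linarith)),
    fun M hM => ?_⟩
  have hM0 : (0:ℝ) < M := by linarith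
  set g : ℕ → ℤ × ℤ → ℝ≥0∞ := fun j p =>
    if M * 2 ^ j ≤ 1 + nsq p ∧ 1 + nsq p < M * 2 ^ (j + 1) then
      ENNReal.ofReal ((1 + nsq p) ^ (-α)) else 0 with hg
  have hpt : ∀ p : ℤ × ℤ, (if M < 1 + nsq p then ENNReal.ofReal ((1 + nsq p) ^ (-α)) else 0)
      ≤ ∑' j : ℕ, g j p := by
    intro p
    split
    · next h =>
      obtain ⟨j, hj1, hj2⟩ := exists_dyadic ((1 + nsq p) / M)
        (by rw [le_div_iff₀ hM0]; linarith)
      have e1 : M * 2 ^ j ≤ 1 + nsq p := by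
        rw [le_div_iff₀ hM0] at hj1; linarith
      have e2 : 1 + nsq p < M * 2 ^ (j + 1) := by
        rw [div_lt_iff₀ hM0] at hj2; linarith
      calc ENNReal.ofReal ((1 + nsq p) ^ (-α)) = g j p := by
            rw [hg]; simp only; rw [if_pos ⟨e1, e2⟩]
        _ ≤ ∑' j, g j p := ENNReal.le_tsum j
    · exact zero_le
  calc ∑' p : ℤ × ℤ, (if M < 1 + nsq p then ENNReal.ofReal ((1 + nsq p) ^ (-α)) else 0)
      ≤ ∑' p : ℤ × ℤ, ∑' j : ℕ, g j p := ENNReal.tsum_le_tsum hpt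
    _ = ∑' j : ℕ, ∑' p : ℤ × ℤ, g j p := ENNReal.tsum_comm
    _ ≤ ∑' j : ℕ, ENNReal.ofReal (9 * (M * 2 ^ (j + 1))) * ENNReal.ofReal ((M * 2 ^ j) ^ (-α)) := by
        apply ENNReal.tsum_le_tsum
        intro j
        apply count_le (M * 2 ^ (j + 1))
          (le_trans hM (le_mul_of_one_le_right hM0.le (one_le_pow₀ one_le_two))) _ _ ?_
        intro p
        rw [hg]; simp only
        split
        · next h =>
          rw [if_pos (le_of_lt h.2)]
          apply ENNReal.ofReal_le_ofReal
          exact Real.rpow_le_rpow_of_nonpos (by positivity) h.1 (by linarith)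
        · exact zero_le
    _ ≤ ∑' j : ℕ, ENNReal.ofReal (18 * M ^ (1 - α)) * ENNReal.ofReal (2 ^ (1 - α)) ^ j := by
        apply ENNReal.tsum_le_tsum
        intro j
        rw [← ENNReal.ofReal_pow hr0.le, ← ENNReal.ofReal_mul (by positivity),
          ← ENNReal.ofReal_mul (by positivity)]
        apply ENNReal.ofReal_le_ofReal
        have e3 : ((2:ℝ) ^ j) ^ (-α) = ((2:ℝ) ^ (-α)) ^ j := by
          rw [← Real.rpow_natCast (2:ℝ) j, ← Real.rpow_mul (by norm_num),
            mul_comm, Real.rpow_mul (by norm_num), Real.rpow_natCast]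
        have e4 : ((2:ℝ) ^ (1 - α)) ^ j = 2 ^ (j:ℕ) * ((2:ℝ) ^ (-α)) ^ j := by
          rw [← mul_pow]
          congr 1
          rw [show (1:ℝ) - α = 1 + (-α) by ring, Real.rpow_add two_pos, Real.rpow_one]
        have e5 : (M * 2 ^ j) ^ (-α) = M ^ (-α) * ((2:ℝ) ^ (-α)) ^ j := by
          rw [Real.mul_rpow hM0.le (by positivity), e3]
        have e6 : M ^ ((1:ℝ) - α) = M * M ^ (-α) := by
          rw [show (1:ℝ) - α = 1 + (-α) by ring, Real.rpow_add hM0, Real.rpow_one]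
        apply le_of_eq
        rw [e5, e4, e6, pow_succ]
        ring
    _ ≤ ENNReal.ofReal (18 * (1 - 2 ^ (1 - α))⁻¹ * M ^ (1 - α)) := by
        rw [ENNReal.tsum_mul_left, ENNReal.tsum_geometric]
        have h7 : (1:ℝ≥0∞) - ENNReal.ofReal (2 ^ ((1:ℝ) - α)) = ENNReal.ofReal (1 - 2 ^ ((1:ℝ) - α)) := by
          rw [← ENNReal.ofReal_one, ← ENNReal.ofReal_sub _ hr0.le]
        rw [h7, ← ENNReal.ofReal_inv_of_pos (by linarith), ← ENNReal.ofReal_mul (by positivity)]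
        apply ENNReal.ofReal_le_ofReal
        apply le_of_eq
        ring

lemma tsum_translate (f : ℤ × ℤ → ℝ≥0∞) (k : ℤ × ℤ) :
    (∑' p : ℤ × ℤ, f (p + k)) = ∑' p : ℤ × ℤ, f p :=
  (Equiv.addRight k).tsum_eq f

lemma rpow_neg_two (x : ℝ) (hx : 0 < x) : x ^ (-(2:ℝ)) = (1/x) ^ 2 := by
  rw [Real.rpow_neg hx.le, show ((2:ℝ)) = ((2:ℕ):ℝ) by norm_num, Real.rpow_natCast,
    one_div, inv_pow]

lemma amgm_recip (a b : ℝ) (ha : 0 < a) (hb : 0 < b) :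
    1 / (a * b) ≤ 1/2 * a ^ (-(2:ℝ)) + 1/2 * b ^ (-(2:ℝ)) := by
  rw [rpow_neg_two a ha, rpow_neg_two b hb]
  have e2 : 1 / (a*b) = (1/a) * (1/b) := by field_simp
  rw [e2]
  nlinarith [sq_nonneg (1/a - 1/b)]

lemma ite_ofReal_mul (c : Prop) [Decidable c] (x y : ℝ) (hx : 0 ≤ x) :
    (if c then ENNReal.ofReal (x * y) else 0)
      = ENNReal.ofReal x * (if c then ENNReal.ofReal y else 0) := by
  split <;> simp [ENNReal.ofReal_mul hx]

lemma ite_ofReal_add (c : Prop) [Decidable c] (x y : ℝ) :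
    (if c then ENNReal.ofReal (x + y) else 0)
      ≤ (if c then ENNReal.ofReal x else 0) + (if c then ENNReal.ofReal y else 0) := by
  split
  · exact ENNReal.ofReal_add_le
  · simp

lemma band_log : ∀ A B : ℝ, 1 ≤ A → A ≤ B →
    ∑' k : ℤ × ℤ, (if A < 1 + nsq k ∧ 1 + nsq k ≤ B then ENNReal.ofReal (1 / (1 + nsq k)) else 0)
      ≤ ENNReal.ofReal (36 * (1 + Real.log (B / A))) := by
  classical
  intro A B hA hAB
  have hA0 : (0:ℝ) < A := by linarith
  have hB0 : (0:ℝ) < B := by linarith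
  have hBA1 : (1:ℝ) ≤ B / A := (one_le_div hA0).mpr hAB
  set N : ℕ := ⌊Real.logb 2 (B / A)⌋₊ + 1 with hN
  set g : ℕ → ℤ × ℤ → ℝ≥0∞ := fun j k =>
    if (2:ℝ) ^ j ≤ B / A ∧ A * 2 ^ j ≤ 1 + nsq k ∧ 1 + nsq k < A * 2 ^ (j + 1) then
      ENNReal.ofReal (1 / (1 + nsq k)) else 0 with hg
  have hpt : ∀ k : ℤ × ℤ,
      (if A < 1 + nsq k ∧ 1 + nsq k ≤ B then ENNReal.ofReal (1 / (1 + nsq k)) else 0)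
      ≤ ∑' j : ℕ, g j k := by
    intro k
    split
    · next h =>
      obtain ⟨j, hj1, hj2⟩ := exists_dyadic ((1 + nsq k) / A)
        (by rw [le_div_iff₀ hA0]; linarith [h.1])
      have e1 : A * 2 ^ j ≤ 1 + nsq k := by rw [le_div_iff₀ hA0] at hj1; linarith
      have e2 : 1 + nsq k < A * 2 ^ (j + 1) := by rw [div_lt_iff₀ hA0] at hj2; linarith
      have e0 : (2:ℝ) ^ j ≤ B / A := by
        apply le_trans hj1
        gcongr
        exact h.2
      calc ENNReal.ofReal (1 / (1 + nsq k)) = g j k := by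
            rw [hg]; simp only; rw [if_pos ⟨e0, e1, e2⟩]
        _ ≤ ∑' j, g j k := ENNReal.le_tsum j
    · exact zero_le
  have hcount : ∀ j : ℕ, ∑' k : ℤ × ℤ, g j k
      ≤ (if (2:ℝ) ^ j ≤ B / A then ENNReal.ofReal 18 else 0) := by
    intro j
    by_cases hj : (2:ℝ) ^ j ≤ B / A
    · rw [if_pos hj]
      have h18 : ENNReal.ofReal (9 * (A * 2 ^ (j+1))) * ENNReal.ofReal ((A * 2 ^ j)⁻¹)
          = ENNReal.ofReal 18 := by
        rw [← ENNReal.ofReal_mul (by positivity)]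
        congr 1
        have h2j : (0:ℝ) < 2 ^ j := by positivity
        field_simp
        ring
      rw [← h18]
      apply count_le (A * 2 ^ (j + 1))
        (le_trans hA (le_mul_of_one_le_right hA0.le (one_le_pow₀ one_le_two))) _ _ ?_
      intro k
      rw [hg]; simp only
      split
      · next h =>
        rw [if_pos (le_of_lt h.2.2)]
        apply ENNReal.ofReal_le_ofReal
        rw [one_div]
        exact inv_anti₀ (by positivity) h.2.1
      · exact zero_le
    · have : ∀ k : ℤ × ℤ, g j k = 0 := by
        intro k; rw [hg]; simp only
        rw [if_neg (by tauto)]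
      simp [this]
  have hNsum : ∑' j : ℕ, (if (2:ℝ) ^ j ≤ B / A then ENNReal.ofReal 18 else 0)
      ≤ ENNReal.ofReal (36 * (1 + Real.log (B / A))) := by
    have hvanish : ∀ j : ℕ, j ∉ Finset.range N →
        (if (2:ℝ) ^ j ≤ B / A then ENNReal.ofReal 18 else 0) = 0 := by
      intro j hj
      rw [Finset.mem_range, not_lt] at hj
      rw [if_neg]
      intro hle
      have h1 : (j:ℝ) ≤ Real.logb 2 (B / A) := by
        have := Real.logb_le_logb_of_le (b := 2) one_lt_two ?_ hle
        · rwa [show ((2:ℝ) ^ j) = (2:ℝ) ^ (j:ℝ) by rw [Real.rpow_natCast],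
            Real.logb_rpow (by norm_num) (by norm_num)] at this
        · positivity
      have h2 : j ≤ ⌊Real.logb 2 (B / A)⌋₊ := Nat.le_floor h1
      omega
    rw [tsum_eq_sum hvanish]
    have hle1 : ∑ j ∈ Finset.range N, (if (2:ℝ) ^ j ≤ B / A then ENNReal.ofReal 18 else 0)
        ≤ ∑ _j ∈ Finset.range N, ENNReal.ofReal 18 :=
      Finset.sum_le_sum (fun j _ => by split <;> simp)
    apply le_trans hle1
    rw [Finset.sum_const, Finset.card_range, nsmul_eq_mul,
      show ((N:ℝ≥0∞)) = ENNReal.ofReal N from (ENNReal.ofReal_natCast N).symm,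
      ← ENNReal.ofReal_mul (by positivity)]
    apply ENNReal.ofReal_le_ofReal
    have hlog0 : 0 ≤ Real.logb 2 (B / A) := Real.logb_nonneg one_lt_two hBA1
    have hfloor : (⌊Real.logb 2 (B / A)⌋₊ : ℝ) ≤ Real.logb 2 (B / A) := Nat.floor_le hlog0
    have hlogb : Real.logb 2 (B / A) ≤ 2 * Real.log (B / A) := by
      rw [Real.logb, div_le_iff₀ (Real.log_pos one_lt_two)]
      have hl2 : (0.6931471803 : ℝ) < Real.log 2 := Real.log_two_gt_d9
      have hlnn : 0 ≤ Real.log (B / A) := Real.log_nonneg hBA1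
      nlinarith
    have hNle : (N:ℝ) ≤ Real.logb 2 (B / A) + 1 := by
      rw [hN]; push_cast; linarith
    have hlnn : 0 ≤ Real.log (B / A) := Real.log_nonneg hBA1
    nlinarith
  calc ∑' k : ℤ × ℤ, (if A < 1 + nsq k ∧ 1 + nsq k ≤ B then ENNReal.ofReal (1 / (1 + nsq k)) else 0)
      ≤ ∑' k : ℤ × ℤ, ∑' j : ℕ, g j k := ENNReal.tsum_le_tsum hpt
    _ = ∑' j : ℕ, ∑' k : ℤ × ℤ, g j k := ENNReal.tsum_comm
    _ ≤ ∑' j : ℕ, (if (2:ℝ) ^ j ≤ B / A then ENNReal.ofReal 18 else 0) :=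
        ENNReal.tsum_le_tsum hcount
    _ ≤ ENNReal.ofReal (36 * (1 + Real.log (B / A))) := hNsum

set_option maxHeartbeats 2000000 in
/-- Pure high-high (Q-Q) contribution: for `3/2 < β ≤ 2` and `Λ ≥ 2`,
`∑_{k ≠ 0} (1+|k|²)^{-β/2} ∑_{h(p) > Λ², h(p+k) > Λ²} ((1+|p|²)(1+|p+k|²))^{-1}
  ≤ C (1+log Λ) Λ^{-β}`. -/
theorem bessel_QQ_tail_double_sum (β : ℝ) (hβ1 : 3 / 2 < β) (hβ2 : β ≤ 2) :
    ∃ C : ℝ, 0 < C ∧ ∀ Λ : ℝ, 2 ≤ Λ →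
      ∑' k : {k : ℤ × ℤ // k ≠ 0},
        ENNReal.ofReal ((1 + nsq k.1) ^ (-(β / 2))) *
          ∑' p : {p : ℤ × ℤ // Λ ^ 2 < 1 + nsq p ∧ Λ ^ 2 < 1 + nsq (p + k.1)},
            ENNReal.ofReal (1 / ((1 + nsq p.1) * (1 + nsq (p.1 + k.1)))) ≤
      ENNReal.ofReal (C * (1 + Real.log Λ) * Λ ^ (-β)) := by

  classical
  obtain ⟨C2, hC2, hsh2⟩ := shell_tail 2 one_lt_two
  obtain ⟨C7, hC7, hsh7⟩ := shell_tail (β/2 + 7/8) (by linarith)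
  obtain ⟨C8, hC8, hsh8⟩ := shell_tail (β/2 + 1) (by linarith)
  refine ⟨2*C2*36 + 2592*C7 + 2*C2*C8, by positivity, fun Λ hΛ => ?_⟩
  have hΛ0 : (0:ℝ) < Λ := by linarith
  have hΛ1 : (1:ℝ) ≤ Λ := by linarith
  set L : ℝ := Λ ^ 2 with hLdef
  have hL1 : (1:ℝ) ≤ L := by nlinarith
  have hL0 : (0:ℝ) < L := by linarith
  have hlogΛ : 0 ≤ Real.log Λ := Real.log_nonneg hΛ1
  have hΛβ : (0:ℝ) ≤ Λ ^ (-β) := Real.rpow_nonneg hΛ0.le _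
  have eLβ : L ^ (-(β/2)) = Λ ^ (-β) := by
    rw [hLdef, ← Real.rpow_natCast Λ 2, ← Real.rpow_mul hΛ0.le]
    congr 1
    push_cast; ring
  set w : ℤ × ℤ → ℝ≥0∞ := fun k => ENNReal.ofReal ((1 + nsq k) ^ (-(β/2))) with hw
  set G : ℤ × ℤ → ℝ≥0∞ := fun k => ∑' p : ℤ × ℤ,
    (if L < 1 + nsq p ∧ L < 1 + nsq (p + k) then
      ENNReal.ofReal (1 / ((1 + nsq p) * (1 + nsq (p + k)))) else 0) with hG
  have hinner : ∀ k : ℤ × ℤ,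
      (∑' p : {p : ℤ × ℤ // L < 1 + nsq p ∧ L < 1 + nsq (p + k)},
        ENNReal.ofReal (1 / ((1 + nsq p.1) * (1 + nsq (p.1 + k))))) = G k := by
    intro k
    rw [hG]
    calc (∑' p : {p : ℤ × ℤ // L < 1 + nsq p ∧ L < 1 + nsq (p + k)},
          ENNReal.ofReal (1 / ((1 + nsq p.1) * (1 + nsq (p.1 + k)))))
        = ∑' p : ℤ × ℤ, Set.indicator {p : ℤ × ℤ | L < 1 + nsq p ∧ L < 1 + nsq (p + k)}
            (fun p => ENNReal.ofReal (1 / ((1 + nsq p) * (1 + nsq (p + k))))) p := by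
          exact tsum_subtype {p : ℤ × ℤ | L < 1 + nsq p ∧ L < 1 + nsq (p + k)}
            (fun p => ENNReal.ofReal (1 / ((1 + nsq p) * (1 + nsq (p + k)))))
      _ = _ := by
          apply tsum_congr
          intro p
          rw [Set.indicator_apply]
          simp only [Set.mem_setOf_eq]
  have hβ0 : (0:ℝ) ≤ β/2 := by linarith
  -- Small and Large parts
  set Sm : ℤ × ℤ → ℝ≥0∞ := fun k => if k ≠ 0 ∧ 1 + nsq k ≤ L then w k * G k else 0 with hSm
  set Lg : ℤ × ℤ → ℝ≥0∞ := fun k => if L < 1 + nsq k then w k * G k else 0 with hLg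
  have hsplit : ∀ k : ℤ × ℤ,
      Set.indicator {k : ℤ × ℤ | k ≠ 0} (fun k => w k * G k) k ≤ Sm k + Lg k := by
    intro k
    rw [Set.indicator_apply]
    split
    · next hk =>
      simp only [Set.mem_setOf_eq] at hk
      rcases le_or_gt (1 + nsq k) L with h | h
      · rw [hSm]; simp only; rw [if_pos ⟨hk, h⟩]; exact le_self_add
      · rw [hLg]; simp only; rw [if_pos h]; exact le_add_self
    · exact zero_le
  -- Bound on G k valid for every k (used for small part)
  have hGsmall : ∀ k : ℤ × ℤ, G k ≤ ENNReal.ofReal (C2 * L ^ ((1:ℝ) - 2)) := by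
    intro k
    have hpt : ∀ p : ℤ × ℤ,
        (if L < 1 + nsq p ∧ L < 1 + nsq (p + k) then
          ENNReal.ofReal (1 / ((1 + nsq p) * (1 + nsq (p + k)))) else 0)
        ≤ ENNReal.ofReal (1/2) *
            (if L < 1 + nsq p then ENNReal.ofReal ((1 + nsq p) ^ (-(2:ℝ))) else 0)
          + ENNReal.ofReal (1/2) *
            (if L < 1 + nsq (p + k) then ENNReal.ofReal ((1 + nsq (p + k)) ^ (-(2:ℝ))) else 0) := by
      intro p
      split
      · next h =>
        rw [if_pos h.1, if_pos h.2, ← ENNReal.ofReal_mul (by norm_num),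
          ← ENNReal.ofReal_mul (by norm_num),
          ← ENNReal.ofReal_add (mul_nonneg (by norm_num) (Real.rpow_nonneg (h_pos p).le _))
            (mul_nonneg (by norm_num) (Real.rpow_nonneg (h_pos (p + k)).le _))]
        exact ENNReal.ofReal_le_ofReal (amgm_recip _ _ (h_pos p) (h_pos (p + k)))
      · exact zero_le
    calc G k ≤ ∑' p : ℤ × ℤ, (ENNReal.ofReal (1/2) *
            (if L < 1 + nsq p then ENNReal.ofReal ((1 + nsq p) ^ (-(2:ℝ))) else 0)
          + ENNReal.ofReal (1/2) *
            (if L < 1 + nsq (p + k) then ENNReal.ofReal ((1 + nsq (p + k)) ^ (-(2:ℝ))) else 0)) := by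
          rw [hG]; exact ENNReal.tsum_le_tsum hpt
      _ = ENNReal.ofReal (1/2) *
            (∑' p : ℤ × ℤ, (if L < 1 + nsq p then ENNReal.ofReal ((1 + nsq p) ^ (-(2:ℝ))) else 0))
          + ENNReal.ofReal (1/2) *
            (∑' p : ℤ × ℤ, (if L < 1 + nsq (p + k) then
              ENNReal.ofReal ((1 + nsq (p + k)) ^ (-(2:ℝ))) else 0)) := by
          rw [ENNReal.tsum_add, ENNReal.tsum_mul_left, ENNReal.tsum_mul_left]
      _ = ENNReal.ofReal (1/2) *
            (∑' p : ℤ × ℤ, (if L < 1 + nsq p then ENNReal.ofReal ((1 + nsq p) ^ (-(2:ℝ))) else 0))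
          + ENNReal.ofReal (1/2) *
            (∑' p : ℤ × ℤ, (if L < 1 + nsq p then ENNReal.ofReal ((1 + nsq p) ^ (-(2:ℝ))) else 0)) := by
          rw [tsum_translate (fun q => if L < 1 + nsq q then
            ENNReal.ofReal ((1 + nsq q) ^ (-(2:ℝ))) else 0) k]
      _ ≤ ENNReal.ofReal (1/2) * ENNReal.ofReal (C2 * L ^ ((1:ℝ) - 2))
          + ENNReal.ofReal (1/2) * ENNReal.ofReal (C2 * L ^ ((1:ℝ) - 2)) := by
          gcongr <;> exact hsh2 L hL1
      _ = ENNReal.ofReal (C2 * L ^ ((1:ℝ) - 2)) := by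
          rw [← add_mul, ← ENNReal.ofReal_add (by norm_num) (by norm_num)]
          norm_num
  -- pointwise bound for the small part
  have hsmall_pt : ∀ k : ℤ × ℤ, Sm k ≤ ENNReal.ofReal (C2 * L ^ ((1:ℝ) - 2) * L ^ (1 - β/2))
      * (if 1 < 1 + nsq k ∧ 1 + nsq k ≤ L then ENNReal.ofReal (1 / (1 + nsq k)) else 0) := by
    intro k
    rw [hSm]; simp only
    split
    · next hk =>
      rw [if_pos ⟨one_lt_h k hk.1, hk.2⟩]
      have hhk := h_pos k
      have hwk : w k ≤ ENNReal.ofReal (L ^ (1 - β/2) * (1 / (1 + nsq k))) := by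
        rw [hw]; simp only
        apply ENNReal.ofReal_le_ofReal
        have e1 : (1 + nsq k) ^ (-(β/2))
            = (1 + nsq k) ^ (1 - β/2) * (1 + nsq k) ^ (-(1:ℝ)) := by
          rw [← Real.rpow_add hhk]; congr 1; ring
        rw [e1, Real.rpow_neg_one, ← one_div]
        apply mul_le_mul ?_ le_rfl (one_div_nonneg.mpr hhk.le) (Real.rpow_nonneg hL0.le _)
        exact Real.rpow_le_rpow hhk.le hk.2 (by linarith)
      calc w k * G k ≤ ENNReal.ofReal (L ^ (1 - β/2) * (1 / (1 + nsq k)))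
            * ENNReal.ofReal (C2 * L ^ ((1:ℝ) - 2)) := mul_le_mul' hwk (hGsmall k)
        _ = ENNReal.ofReal (C2 * L ^ ((1:ℝ) - 2) * L ^ (1 - β/2))
            * ENNReal.ofReal (1 / (1 + nsq k)) := by
            rw [← ENNReal.ofReal_mul
                (mul_nonneg (Real.rpow_nonneg hL0.le _) (one_div_nonneg.mpr hhk.le)),
              ← ENNReal.ofReal_mul (by positivity)]
            congr 1
            ring
    · exact zero_le
  have hsmall_final : (∑' k : ℤ × ℤ, Sm k)
      ≤ ENNReal.ofReal ((2*C2*36) * ((1 + Real.log Λ) * Λ ^ (-β))) := by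
    calc ∑' k : ℤ × ℤ, Sm k
        ≤ ∑' k : ℤ × ℤ, ENNReal.ofReal (C2 * L ^ ((1:ℝ) - 2) * L ^ (1 - β/2))
          * (if 1 < 1 + nsq k ∧ 1 + nsq k ≤ L then ENNReal.ofReal (1 / (1 + nsq k)) else 0) :=
          ENNReal.tsum_le_tsum hsmall_pt
      _ = ENNReal.ofReal (C2 * L ^ ((1:ℝ) - 2) * L ^ (1 - β/2))
          * ∑' k : ℤ × ℤ, (if 1 < 1 + nsq k ∧ 1 + nsq k ≤ L
              then ENNReal.ofReal (1 / (1 + nsq k)) else 0) := ENNReal.tsum_mul_left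
      _ ≤ ENNReal.ofReal (C2 * L ^ ((1:ℝ) - 2) * L ^ (1 - β/2))
          * ENNReal.ofReal (36 * (1 + Real.log (L / 1))) :=
          mul_le_mul_right (band_log 1 L le_rfl hL1) _
      _ ≤ ENNReal.ofReal ((2*C2*36) * ((1 + Real.log Λ) * Λ ^ (-β))) := by
          rw [← ENNReal.ofReal_mul (by positivity)]
          apply ENNReal.ofReal_le_ofReal
          rw [div_one]
          have e1 : L ^ ((1:ℝ) - 2) * L ^ (1 - β/2) = L ^ (-(β/2)) := by
            rw [← Real.rpow_add hL0]; congr 1; ring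
          have e3 : Real.log L = 2 * Real.log Λ := by
            rw [hLdef, Real.log_pow]; push_cast; ring
          have e4 : C2 * L ^ ((1:ℝ) - 2) * L ^ (1 - β/2) * (36 * (1 + Real.log L))
              = 36 * C2 * Λ ^ (-β) * (1 + 2 * Real.log Λ) := by
            rw [mul_assoc C2, e1, eLβ, e3]; ring
          rw [e4]
          nlinarith [mul_nonneg (mul_nonneg hC2.le hΛβ) hlogΛ, mul_nonneg hC2.le hΛβ]
  -- Large part
  have hlarge_pt : ∀ k : ℤ × ℤ, Lg k ≤
      ENNReal.ofReal (2592 * L ^ (-((1:ℝ)/8))) *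
        (if L < 1 + nsq k then ENNReal.ofReal ((1 + nsq k) ^ (-(β/2 + 7/8))) else 0)
      + ENNReal.ofReal (2 * C2) *
        (if L < 1 + nsq k then ENNReal.ofReal ((1 + nsq k) ^ (-(β/2 + 1))) else 0) := by
    intro k
    rw [hLg]; simp only
    split
    · next hk =>
      have ha0 : (0:ℝ) < 1 + nsq k := h_pos k
      have ha1 : (1:ℝ) ≤ 1 + nsq k := one_le_h k
      set a : ℝ := 1 + nsq k with ha
      have haL : L < a := hk
      have hlogaL : 0 ≤ Real.log (a / L) := Real.log_nonneg ((one_le_div hL0).mpr haL.le)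
      have hE0 : (0:ℝ) ≤ (4/a) * (36 * (1 + Real.log (a / L))) := by
        apply mul_nonneg (div_nonneg (by norm_num) ha0.le)
        nlinarith
      have hF0 : (0:ℝ) ≤ C2 * a ^ ((1:ℝ) - 2) :=
        mul_nonneg hC2.le (Real.rpow_nonneg ha0.le _)
      -- pointwise bound for the inner sum
      have hpt4 : ∀ p : ℤ × ℤ,
          (if L < 1 + nsq p ∧ L < 1 + nsq (p + k) then
            ENNReal.ofReal (1 / ((1 + nsq p) * (1 + nsq (p + k)))) else 0)
          ≤ (if L < 1 + nsq p ∧ 1 + nsq p ≤ a then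
              ENNReal.ofReal ((4/a) * (1 / (1 + nsq p))) else 0)
            + (if a < 1 + nsq p then ENNReal.ofReal ((1 + nsq p) ^ (-(2:ℝ))) else 0)
            + (if L < 1 + nsq (p + k) ∧ 1 + nsq (p + k) ≤ a then
              ENNReal.ofReal ((4/a) * (1 / (1 + nsq (p + k)))) else 0)
            + (if a < 1 + nsq (p + k) then
              ENNReal.ofReal ((1 + nsq (p + k)) ^ (-(2:ℝ))) else 0) := by
        intro p
        split
        · next h =>
          have hb1 : (0:ℝ) < 1 + nsq p := h_pos p
          have hb2 : (0:ℝ) < 1 + nsq (p + k) := h_pos (p + k)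
          have hquad : a ≤ 2 * (1 + nsq p) + 2 * (1 + nsq (p + k)) := h_quad p k
          rcases le_total (1 + nsq p) (1 + nsq (p + k)) with hc | hc
          · rcases le_or_gt (1 + nsq p) a with hd | hd
            · have key : ENNReal.ofReal (1 / ((1 + nsq p) * (1 + nsq (p + k)))) ≤
                  (if L < 1 + nsq p ∧ 1 + nsq p ≤ a then
                    ENNReal.ofReal ((4/a) * (1 / (1 + nsq p))) else 0) := by
                rw [if_pos ⟨h.1, hd⟩]
                apply ENNReal.ofReal_le_ofReal
                have e : (4/a) * (1 / (1 + nsq p)) = 4 / (a * (1 + nsq p)) := by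
                  rw [div_mul_div_comm, mul_one]
                rw [e, div_le_div_iff₀ (by positivity) (by positivity)]
                nlinarith
              exact le_trans key (le_add_right (le_add_right le_self_add))
            · have key : ENNReal.ofReal (1 / ((1 + nsq p) * (1 + nsq (p + k)))) ≤
                  (if a < 1 + nsq p then ENNReal.ofReal ((1 + nsq p) ^ (-(2:ℝ))) else 0) := by
                rw [if_pos hd]
                apply ENNReal.ofReal_le_ofReal
                rw [rpow_neg_two _ hb1, one_div_pow,
                  div_le_div_iff₀ (by positivity) (by positivity)]
                nlinarith
              exact le_trans key (le_add_right (le_add_right le_add_self))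
          · rcases le_or_gt (1 + nsq (p + k)) a with hd | hd
            · have key : ENNReal.ofReal (1 / ((1 + nsq p) * (1 + nsq (p + k)))) ≤
                  (if L < 1 + nsq (p + k) ∧ 1 + nsq (p + k) ≤ a then
                    ENNReal.ofReal ((4/a) * (1 / (1 + nsq (p + k)))) else 0) := by
                rw [if_pos ⟨h.2, hd⟩]
                apply ENNReal.ofReal_le_ofReal
                have e : (4/a) * (1 / (1 + nsq (p + k))) = 4 / (a * (1 + nsq (p + k))) := by
                  rw [div_mul_div_comm, mul_one]
                rw [e, div_le_div_iff₀ (by positivity) (by positivity)]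
                nlinarith
              exact le_trans key (le_add_right le_add_self)
            · have key : ENNReal.ofReal (1 / ((1 + nsq p) * (1 + nsq (p + k)))) ≤
                  (if a < 1 + nsq (p + k) then
                    ENNReal.ofReal ((1 + nsq (p + k)) ^ (-(2:ℝ))) else 0) := by
                rw [if_pos hd]
                apply ENNReal.ofReal_le_ofReal
                rw [rpow_neg_two _ hb2, one_div_pow,
                  div_le_div_iff₀ (by positivity) (by positivity)]
                nlinarith
              exact le_trans key le_add_self
        · exact zero_le
      -- the four partial sums
      have hS1 : (∑' p : ℤ × ℤ, (if L < 1 + nsq p ∧ 1 + nsq p ≤ a then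
            ENNReal.ofReal ((4/a) * (1 / (1 + nsq p))) else 0))
          ≤ ENNReal.ofReal ((4/a) * (36 * (1 + Real.log (a / L)))) := by
        have hmul : ∀ p : ℤ × ℤ, (if L < 1 + nsq p ∧ 1 + nsq p ≤ a then
            ENNReal.ofReal ((4/a) * (1 / (1 + nsq p))) else 0)
            = ENNReal.ofReal (4/a) * (if L < 1 + nsq p ∧ 1 + nsq p ≤ a then
              ENNReal.ofReal (1 / (1 + nsq p)) else 0) := fun p =>
          ite_ofReal_mul _ _ _ (div_nonneg (by norm_num) ha0.le)
        rw [tsum_congr hmul, ENNReal.tsum_mul_left,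
          ENNReal.ofReal_mul (div_nonneg (by norm_num) ha0.le)]
        exact mul_le_mul_right (band_log L a hL1 haL.le) _
      have hGk : G k ≤ ENNReal.ofReal ((4/a) * (36 * (1 + Real.log (a / L)))
          + C2 * a ^ ((1:ℝ) - 2) + (4/a) * (36 * (1 + Real.log (a / L)))
          + C2 * a ^ ((1:ℝ) - 2)) := by
        rw [hG]; simp only
        calc (∑' p : ℤ × ℤ, (if L < 1 + nsq p ∧ L < 1 + nsq (p + k) then
              ENNReal.ofReal (1 / ((1 + nsq p) * (1 + nsq (p + k)))) else 0))
            ≤ ∑' p : ℤ × ℤ, ((if L < 1 + nsq p ∧ 1 + nsq p ≤ a then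
                ENNReal.ofReal ((4/a) * (1 / (1 + nsq p))) else 0)
              + (if a < 1 + nsq p then ENNReal.ofReal ((1 + nsq p) ^ (-(2:ℝ))) else 0)
              + (if L < 1 + nsq (p + k) ∧ 1 + nsq (p + k) ≤ a then
                ENNReal.ofReal ((4/a) * (1 / (1 + nsq (p + k)))) else 0)
              + (if a < 1 + nsq (p + k) then
                ENNReal.ofReal ((1 + nsq (p + k)) ^ (-(2:ℝ))) else 0)) :=
              ENNReal.tsum_le_tsum hpt4
          _ = (∑' p : ℤ × ℤ, (if L < 1 + nsq p ∧ 1 + nsq p ≤ a then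
                ENNReal.ofReal ((4/a) * (1 / (1 + nsq p))) else 0))
              + (∑' p : ℤ × ℤ, (if a < 1 + nsq p then
                ENNReal.ofReal ((1 + nsq p) ^ (-(2:ℝ))) else 0))
              + (∑' p : ℤ × ℤ, (if L < 1 + nsq (p + k) ∧ 1 + nsq (p + k) ≤ a then
                ENNReal.ofReal ((4/a) * (1 / (1 + nsq (p + k)))) else 0))
              + (∑' p : ℤ × ℤ, (if a < 1 + nsq (p + k) then
                ENNReal.ofReal ((1 + nsq (p + k)) ^ (-(2:ℝ))) else 0)) := by
              rw [ENNReal.tsum_add, ENNReal.tsum_add, ENNReal.tsum_add]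
          _ ≤ ENNReal.ofReal ((4/a) * (36 * (1 + Real.log (a / L))))
              + ENNReal.ofReal (C2 * a ^ ((1:ℝ) - 2))
              + ENNReal.ofReal ((4/a) * (36 * (1 + Real.log (a / L))))
              + ENNReal.ofReal (C2 * a ^ ((1:ℝ) - 2)) := by
              have e3 : (∑' p : ℤ × ℤ, (if L < 1 + nsq (p + k) ∧ 1 + nsq (p + k) ≤ a then
                  ENNReal.ofReal ((4/a) * (1 / (1 + nsq (p + k)))) else 0))
                  = ∑' p : ℤ × ℤ, (if L < 1 + nsq p ∧ 1 + nsq p ≤ a then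
                    ENNReal.ofReal ((4/a) * (1 / (1 + nsq p))) else 0) :=
                tsum_translate (fun q => if L < 1 + nsq q ∧ 1 + nsq q ≤ a then
                  ENNReal.ofReal ((4/a) * (1 / (1 + nsq q))) else 0) k
              have e4 : (∑' p : ℤ × ℤ, (if a < 1 + nsq (p + k) then
                  ENNReal.ofReal ((1 + nsq (p + k)) ^ (-(2:ℝ))) else 0))
                  = ∑' p : ℤ × ℤ, (if a < 1 + nsq p then
                    ENNReal.ofReal ((1 + nsq p) ^ (-(2:ℝ))) else 0) :=
                tsum_translate (fun q => if a < 1 + nsq q then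
                  ENNReal.ofReal ((1 + nsq q) ^ (-(2:ℝ))) else 0) k
              rw [e3, e4]
              exact add_le_add (add_le_add (add_le_add hS1 (hsh2 a ha1)) hS1) (hsh2 a ha1)
          _ = ENNReal.ofReal ((4/a) * (36 * (1 + Real.log (a / L)))
              + C2 * a ^ ((1:ℝ) - 2) + (4/a) * (36 * (1 + Real.log (a / L)))
              + C2 * a ^ ((1:ℝ) - 2)) := by
              rw [← ENNReal.ofReal_add hE0 hF0,
                ← ENNReal.ofReal_add (add_nonneg hE0 hF0) hE0,
                ← ENNReal.ofReal_add (add_nonneg (add_nonneg hE0 hF0) hE0) hF0]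
      -- combine with the weight
      calc w k * G k ≤ ENNReal.ofReal (a ^ (-(β/2))) *
            ENNReal.ofReal ((4/a) * (36 * (1 + Real.log (a / L)))
              + C2 * a ^ ((1:ℝ) - 2) + (4/a) * (36 * (1 + Real.log (a / L)))
              + C2 * a ^ ((1:ℝ) - 2)) := mul_le_mul' le_rfl hGk
        _ = ENNReal.ofReal (a ^ (-(β/2)) * ((4/a) * (36 * (1 + Real.log (a / L)))
              + C2 * a ^ ((1:ℝ) - 2) + (4/a) * (36 * (1 + Real.log (a / L)))
              + C2 * a ^ ((1:ℝ) - 2))) := by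
            rw [← ENNReal.ofReal_mul (Real.rpow_nonneg ha0.le _)]
        _ ≤ ENNReal.ofReal (2592 * L ^ (-((1:ℝ)/8)) * a ^ (-(β/2 + 7/8))
              + 2 * C2 * a ^ (-(β/2 + 1))) := by
            apply ENNReal.ofReal_le_ofReal
            have hlog9 : 1 + Real.log (a / L) ≤ 9 * (a / L) ^ ((1:ℝ)/8) :=
              one_add_log_le _ ((one_le_div hL0).mpr haL.le)
            have hfrac : (a / L) ^ ((1:ℝ)/8) = a ^ ((1:ℝ)/8) * L ^ (-((1:ℝ)/8)) := by
              rw [Real.div_rpow ha0.le hL0.le, Real.rpow_neg hL0.le, div_eq_mul_inv]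
            have e5 : a ^ (-(β/2 + 7/8)) = a ^ (-(β/2)) * (a⁻¹ * a ^ ((1:ℝ)/8)) := by
              rw [← Real.rpow_neg_one a, ← Real.rpow_add ha0, ← Real.rpow_add ha0]
              congr 1; ring
            have e6 : a ^ (-(β/2 + 1)) = a ^ (-(β/2)) * a⁻¹ := by
              rw [← Real.rpow_neg_one a, ← Real.rpow_add ha0]
              congr 1; ring
            have e7 : a ^ ((1:ℝ) - 2) = a⁻¹ := by
              rw [show (1:ℝ) - 2 = -1 by norm_num, Real.rpow_neg_one]
            calc a ^ (-(β/2)) * ((4/a) * (36 * (1 + Real.log (a / L)))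
                  + C2 * a ^ ((1:ℝ) - 2) + (4/a) * (36 * (1 + Real.log (a / L)))
                  + C2 * a ^ ((1:ℝ) - 2))
                = (288/a) * a ^ (-(β/2)) * (1 + Real.log (a / L))
                  + 2 * C2 * (a ^ (-(β/2)) * a ^ ((1:ℝ) - 2)) := by ring
              _ ≤ (288/a) * a ^ (-(β/2)) * (9 * (a / L) ^ ((1:ℝ)/8))
                  + 2 * C2 * (a ^ (-(β/2)) * a ^ ((1:ℝ) - 2)) := by
                  apply add_le_add_left
                  apply mul_le_mul_of_nonneg_left hlog9
                  exact mul_nonneg (div_nonneg (by norm_num) ha0.le)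
                    (Real.rpow_nonneg ha0.le _)
              _ = 2592 * L ^ (-((1:ℝ)/8)) * a ^ (-(β/2 + 7/8))
                  + 2 * C2 * a ^ (-(β/2 + 1)) := by
                  rw [hfrac, e5, e6, e7, div_eq_mul_inv]
                  ring
        _ = ENNReal.ofReal (2592 * L ^ (-((1:ℝ)/8)) * a ^ (-(β/2 + 7/8)))
            + ENNReal.ofReal (2 * C2 * a ^ (-(β/2 + 1))) := by
            rw [← ENNReal.ofReal_add
              (mul_nonneg (by positivity) (Real.rpow_nonneg ha0.le _))
              (mul_nonneg (by positivity) (Real.rpow_nonneg ha0.le _))]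
        _ = ENNReal.ofReal (2592 * L ^ (-((1:ℝ)/8))) *
              ENNReal.ofReal (a ^ (-(β/2 + 7/8)))
            + ENNReal.ofReal (2 * C2) * ENNReal.ofReal (a ^ (-(β/2 + 1))) := by
            rw [← ENNReal.ofReal_mul (by positivity), ← ENNReal.ofReal_mul (by positivity)]
    · simp
  have hlarge_final : (∑' k : ℤ × ℤ, Lg k)
      ≤ ENNReal.ofReal ((2592*C7 + 2*C2*C8) * ((1 + Real.log Λ) * Λ ^ (-β))) := by
    calc ∑' k : ℤ × ℤ, Lg k
        ≤ ∑' k : ℤ × ℤ, (ENNReal.ofReal (2592 * L ^ (-((1:ℝ)/8))) *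
            (if L < 1 + nsq k then ENNReal.ofReal ((1 + nsq k) ^ (-(β/2 + 7/8))) else 0)
          + ENNReal.ofReal (2 * C2) *
            (if L < 1 + nsq k then ENNReal.ofReal ((1 + nsq k) ^ (-(β/2 + 1))) else 0)) :=
          ENNReal.tsum_le_tsum hlarge_pt
      _ = ENNReal.ofReal (2592 * L ^ (-((1:ℝ)/8))) *
            (∑' k : ℤ × ℤ, (if L < 1 + nsq k then
              ENNReal.ofReal ((1 + nsq k) ^ (-(β/2 + 7/8))) else 0))
          + ENNReal.ofReal (2 * C2) *
            (∑' k : ℤ × ℤ, (if L < 1 + nsq k then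
              ENNReal.ofReal ((1 + nsq k) ^ (-(β/2 + 1))) else 0)) := by
          rw [ENNReal.tsum_add, ENNReal.tsum_mul_left, ENNReal.tsum_mul_left]
      _ ≤ ENNReal.ofReal (2592 * L ^ (-((1:ℝ)/8))) *
            ENNReal.ofReal (C7 * L ^ (1 - (β/2 + 7/8)))
          + ENNReal.ofReal (2 * C2) * ENNReal.ofReal (C8 * L ^ (1 - (β/2 + 1))) :=
          add_le_add (mul_le_mul_right (hsh7 L hL1) _) (mul_le_mul_right (hsh8 L hL1) _)
      _ ≤ ENNReal.ofReal ((2592*C7 + 2*C2*C8) * ((1 + Real.log Λ) * Λ ^ (-β))) := by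
          rw [← ENNReal.ofReal_mul (by positivity), ← ENNReal.ofReal_mul (by positivity),
            ← ENNReal.ofReal_add (by positivity) (by positivity)]
          apply ENNReal.ofReal_le_ofReal
          have e1 : L ^ (-((1:ℝ)/8)) * L ^ (1 - (β/2 + 7/8)) = Λ ^ (-β) := by
            rw [← Real.rpow_add hL0, show -((1:ℝ)/8) + (1 - (β/2 + 7/8)) = -(β/2) by ring, eLβ]
          have e2 : L ^ (1 - (β/2 + 1)) = Λ ^ (-β) := by
            rw [show (1:ℝ) - (β/2 + 1) = -(β/2) by ring, eLβ]
          calc 2592 * L ^ (-((1:ℝ)/8)) * (C7 * L ^ (1 - (β/2 + 7/8)))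
                + 2 * C2 * (C8 * L ^ (1 - (β/2 + 1)))
              = (2592*C7 + 2*C2*C8) * Λ ^ (-β) := by
                rw [show 2592 * L ^ (-((1:ℝ)/8)) * (C7 * L ^ (1 - (β/2 + 7/8)))
                    = 2592 * C7 * (L ^ (-((1:ℝ)/8)) * L ^ (1 - (β/2 + 7/8))) by ring, e1, e2]
                ring
            _ ≤ (2592*C7 + 2*C2*C8) * ((1 + Real.log Λ) * Λ ^ (-β)) := by
                nlinarith [mul_nonneg (mul_nonneg
                  (by positivity : (0:ℝ) ≤ 2592*C7 + 2*C2*C8) hΛβ) hlogΛ]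
  -- assemble
  calc (∑' k : {k : ℤ × ℤ // k ≠ 0},
        ENNReal.ofReal ((1 + nsq k.1) ^ (-(β/2))) *
          ∑' p : {p : ℤ × ℤ // L < 1 + nsq p ∧ L < 1 + nsq (p + k.1)},
            ENNReal.ofReal (1 / ((1 + nsq p.1) * (1 + nsq (p.1 + k.1)))))
      = ∑' k : {k : ℤ × ℤ // k ≠ 0}, w k.1 * G k.1 := by
        apply tsum_congr
        intro k
        rw [hinner k.1]
    _ = ∑' k : ℤ × ℤ, Set.indicator {k : ℤ × ℤ | k ≠ 0} (fun k => w k * G k) k := by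
        exact tsum_subtype {k : ℤ × ℤ | k ≠ 0} (fun k => w k * G k)
    _ ≤ ∑' k : ℤ × ℤ, (Sm k + Lg k) := ENNReal.tsum_le_tsum hsplit
    _ = (∑' k : ℤ × ℤ, Sm k) + (∑' k : ℤ × ℤ, Lg k) := ENNReal.tsum_add
    _ ≤ ENNReal.ofReal ((2*C2*36) * ((1 + Real.log Λ) * Λ ^ (-β)))
        + ENNReal.ofReal ((2592*C7 + 2*C2*C8) * ((1 + Real.log Λ) * Λ ^ (-β))) :=
        add_le_add hsmall_final hlarge_final
    _ ≤ ENNReal.ofReal ((2*C2*36 + 2592*C7 + 2*C2*C8) * (1 + Real.log Λ) * Λ ^ (-β)) := by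
        rw [← ENNReal.ofReal_add
          (mul_nonneg (by positivity) (mul_nonneg (by linarith) hΛβ))
          (mul_nonneg (by positivity) (mul_nonneg (by linarith) hΛβ))]
        apply ENNReal.ofReal_le_ofReal
        apply le_of_eq
        ring
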